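/- Let G₁ be a connected m-uniform hypergraph on n₁ vertices whose incidence matrix over ℤ/mℤ has invariant divisors d₁,...,d_{r₁}, and let G₂ be a connected m-uniform hypergraph on n₂ vertices whose incidence matrix has invariant divisors d̄₁,...,d̄_{r₂}. Then the stabilizing index of the Cartesian product satisfies s(G₁ □ G₂) = m^{(n₁−r₁)(n₂−r₂)−1} · ∏_{i,j} gcd(dᵢ, d̄ⱼ) · ∏_i dᵢ^{n₂−r₂} · ∏_j d̄ⱼ^{n₁−r₁}. -/
import Mathlib


open Matrix

/-- An `m`-uniform hypergraph on the vertex type `V`. -/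
structure HG (m : ℕ) (V : Type) where
  edges : Finset (Finset V)
  uniform : ∀ e ∈ edges, e.card = m

namespace HG

variable {m : ℕ} {V : Type}

/-- Two vertices are adjacent if they are distinct and some edge contains both. -/
def adj (G : HG m V) (u v : V) : Prop :=
  u ≠ v ∧ ∃ e ∈ G.edges, u ∈ e ∧ v ∈ e

/-- A hypergraph is connected if every two vertices are joined by a walk. -/
def Connected (G : HG m V) : Prop :=
  ∀ u v : V, Relation.ReflTransGen G.adj u v

/-- The incidence matrix of `G` over `ZMod m`: rows are edges, columns are vertices,
entry `1` iff the vertex lies in the edge. -/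
def inc [DecidableEq V] (G : HG m V) : Matrix {e // e ∈ G.edges} V (ZMod m) :=
  Matrix.of fun e v => if v ∈ e.1 then 1 else 0

/-- The stabilizing index of `G` with respect to a base vertex `v₀`: the number of
solutions `x` of `In(G)·x = 0` over `ZMod m` with `x v₀ = 0`. -/
noncomputable def stabIndex [DecidableEq V] [Fintype V] (G : HG m V) (v₀ : V) : ℕ :=
  Nat.card {x : V → ZMod m // G.inc.mulVec x = 0 ∧ x v₀ = 0}

/-- The cyclic index of `G`: the largest divisor `ℓ` of `m` such that `G` has an
`(m,ℓ)`-coloring, i.e. a vertex labelling whose sum on each edge is `m/ℓ` mod `m`. -/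
noncomputable def cyclicIndex (G : HG m V) : ℕ :=
  sSup {ℓ : ℕ | ℓ ∣ m ∧ ∃ x : V → ZMod m, ∀ e ∈ G.edges, ∑ v ∈ e, x v = ((m / ℓ : ℕ) : ZMod m)}

end HG

/-- The Cartesian product of two `m`-uniform hypergraphs: an edge is an edge of one
factor in one coordinate, with the other coordinate held constant. -/
def cartProd {m : ℕ} {V₁ V₂ : Type} [DecidableEq V₁] [DecidableEq V₂] [Fintype V₁] [Fintype V₂]
    (G₁ : HG m V₁) (G₂ : HG m V₂) : HG m (V₁ × V₂) where
  edges :=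
    (Finset.univ : Finset V₁).biUnion
        (fun u => G₂.edges.image (Finset.image (fun v => (u, v)))) ∪
      (Finset.univ : Finset V₂).biUnion
        (fun v => G₁.edges.image (Finset.image (fun u => (u, v))))
  uniform := by
    intro e he
    simp only [Finset.mem_union, Finset.mem_biUnion, Finset.mem_image, Finset.mem_univ,
      true_and] at he
    rcases he with ⟨u, f, hf, rfl⟩ | ⟨v, f, hf, rfl⟩
    · rw [Finset.card_image_of_injective _ (fun a b hab => by simpa using hab)]
      exact G₂.uniform f hf
    · rw [Finset.card_image_of_injective _ (fun a b hab => by simpa using hab)]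
      exact G₁.uniform f hf

/-- `B` has (nonzero) invariant divisors `d 0, …, d (r-1)` in its Smith normal form over
`ZMod m`: there are invertible `P`, `Q` and labelings of rows and columns by initial
segments of `ℕ` such that `P * B * Q` is diagonal with entries `d 0, …, d (r-1), 0, …, 0`,
where `1 ≤ d i ≤ m - 1`, each `d i` divides `m`, and `d i ∣ d j` for `i ≤ j`. -/
def HasInvDiv {m : ℕ} {α β : Type} [Fintype α] [DecidableEq α] [Fintype β] [DecidableEq β]
    (B : Matrix α β (ZMod m)) (r : ℕ) (d : Fin r → ℕ) : Prop :=
  r ≤ Fintype.card α ∧ r ≤ Fintype.card β ∧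
  (∀ i : Fin r, 0 < d i ∧ d i < m ∧ d i ∣ m) ∧
  (∀ i j : Fin r, i ≤ j → d i ∣ d j) ∧
  ∃ (P : Matrix α α (ZMod m)) (Q : Matrix β β (ZMod m))
      (eα : α ≃ Fin (Fintype.card α)) (eβ : β ≃ Fin (Fintype.card β)),
    IsUnit P.det ∧ IsUnit Q.det ∧
      ∀ (a : α) (b : β), (P * B * Q) a b =
        if h : (eα a : ℕ) = (eβ b : ℕ) ∧ (eα a : ℕ) < r
        then ((d ⟨eα a, h.2⟩ : ℕ) : ZMod m) else 0


section Auxiliary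


section NatCount

lemma count1 (m g : ℕ) (hm : 0 < m) (hg : g ∣ m) :
    Nat.card {z : ZMod m // (g : ZMod m) * z = 0} = g := by
  haveI : NeZero m := ⟨hm.ne'⟩
  have hg0 : 0 < g := Nat.pos_of_dvd_of_pos hg hm
  have hset : {z : ZMod m | (g : ZMod m) * z = 0}
      = (AddSubgroup.zmultiples ((m / g : ℕ) : ZMod m) : Set (ZMod m)) := by
    ext z
    simp only [Set.mem_setOf_eq, SetLike.mem_coe, AddSubgroup.mem_zmultiples_iff]
    constructor
    · intro h
      have h1 : (((g * z.val : ℕ) : ZMod m)) = 0 := by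
        rw [Nat.cast_mul, ZMod.natCast_zmod_val]; exact h
      rw [ZMod.natCast_eq_zero_iff] at h1
      have h2 : m / g * g ∣ z.val * g := by
        rw [Nat.div_mul_cancel hg]
        simpa [mul_comm] using h1
      have h3 : m / g ∣ z.val := (Nat.mul_dvd_mul_iff_right hg0).mp h2
      obtain ⟨t, ht⟩ := h3
      refine ⟨t, ?_⟩
      rw [← ZMod.natCast_zmod_val z, ht, Nat.cast_mul]
      push_cast [zsmul_eq_mul]
      ring
    · rintro ⟨k, rfl⟩
      rw [zsmul_eq_mul]
      have : ((g : ZMod m)) * ((k : ZMod m) * ((m / g : ℕ) : ZMod m)) =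
          (k : ZMod m) * (((g * (m / g) : ℕ)) : ZMod m) := by push_cast; ring
      rw [this, Nat.mul_div_cancel' hg, ZMod.natCast_self, mul_zero]
  have : Nat.card {z : ZMod m // (g : ZMod m) * z = 0}
      = Nat.card (AddSubgroup.zmultiples ((m / g : ℕ) : ZMod m)) := by
    apply Nat.card_congr
    exact Equiv.setCongr hset
  rw [this, Nat.card_zmultiples, ZMod.addOrderOf_coe _ hm.ne',
    Nat.gcd_eq_right (Nat.div_dvd_of_dvd hg), Nat.div_div_self hg hm.ne']

lemma cast_mul_eq_zero_iff (m c : ℕ) [NeZero m] (z : ZMod m) :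
    (c : ZMod m) * z = 0 ↔ m ∣ c * z.val := by
  rw [← ZMod.natCast_eq_zero_iff, Nat.cast_mul, ZMod.natCast_zmod_val]

lemma count2 (m a b : ℕ) (hm : 0 < m) (ha : a ∣ m) :
    Nat.card {z : ZMod m // (a : ZMod m) * z = 0 ∧ (b : ZMod m) * z = 0} = Nat.gcd a b := by
  haveI : NeZero m := ⟨hm.ne'⟩
  have key : ∀ z : ZMod m, ((a : ZMod m) * z = 0 ∧ (b : ZMod m) * z = 0) ↔
      ((Nat.gcd a b : ZMod m) * z = 0) := by
    intro z
    rw [cast_mul_eq_zero_iff, cast_mul_eq_zero_iff, cast_mul_eq_zero_iff]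
    constructor
    · rintro ⟨h1, h2⟩
      have := Nat.dvd_gcd h1 h2
      rwa [Nat.gcd_mul_right] at this
    · intro h
      have h1 : Nat.gcd a b * z.val ∣ a * z.val :=
        Nat.mul_dvd_mul_right (Nat.gcd_dvd_left a b) z.val
      have h2 : Nat.gcd a b * z.val ∣ b * z.val :=
        Nat.mul_dvd_mul_right (Nat.gcd_dvd_right a b) z.val
      exact ⟨h.trans h1, h.trans h2⟩
  rw [Nat.card_congr (Equiv.subtypeEquivRight key)]
  exact count1 m _ hm ((Nat.gcd_dvd_left a b).trans ha)

end NatCount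

section MatrixTransport

variable {R : Type} [CommRing R]

lemma mul_left_cancel_zero' {n κ : Type} [Fintype n] [DecidableEq n] [Fintype κ]
    (P : Matrix n n R) (hP : IsUnit P.det) (M : Matrix n κ R) :
    P * M = 0 ↔ M = 0 := by
  constructor
  · intro h
    have := congrArg (fun N => P⁻¹ * N) h
    simpa [← Matrix.mul_assoc, Matrix.nonsing_inv_mul P hP] using this
  · rintro rfl; simp

lemma mul_right_cancel_zero' {n κ : Type} [Fintype n] [DecidableEq n] [Fintype κ]
    (P : Matrix n n R) (hP : IsUnit P.det) (M : Matrix κ n R) :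
    M * P = 0 ↔ M = 0 := by
  constructor
  · intro h
    have := congrArg (fun N => N * P⁻¹) h
    simpa [Matrix.mul_assoc, Matrix.mul_nonsing_inv P hP] using this
  · rintro rfl; simp

/-- transport kernel conditions through invertible P, Q. -/
noncomputable def kerEquiv {α β : Type} [Fintype α] [DecidableEq α] [Fintype β] [DecidableEq β]
    {n₁ n₂ : Type} [Fintype n₁] [DecidableEq n₁] [Fintype n₂] [DecidableEq n₂]
    (B₁ : Matrix α n₁ R) (B₂ : Matrix β n₂ R)
    (P₁ : Matrix α α R) (Q₁ : Matrix n₁ n₁ R) (P₂ : Matrix β β R) (Q₂ : Matrix n₂ n₂ R)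
    (hP₁ : IsUnit P₁.det) (hQ₁ : IsUnit Q₁.det) (hP₂ : IsUnit P₂.det) (hQ₂ : IsUnit Q₂.det) :
    {X : Matrix n₁ n₂ R // B₁ * X = 0 ∧ X * B₂ᵀ = 0} ≃
      {Y : Matrix n₁ n₂ R // (P₁ * B₁ * Q₁) * Y = 0 ∧ Y * (P₂ * B₂ * Q₂)ᵀ = 0} := by
  have hQ₁' : Q₁⁻¹ * Q₁ = 1 := Matrix.nonsing_inv_mul Q₁ hQ₁
  have hQ₁'' : Q₁ * Q₁⁻¹ = 1 := Matrix.mul_nonsing_inv Q₁ hQ₁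
  have hQ₂' : Q₂ᵀ * Q₂ᵀ⁻¹ = 1 := Matrix.mul_nonsing_inv _ (Matrix.isUnit_det_transpose Q₂ hQ₂)
  have hQ₂'' : Q₂ᵀ⁻¹ * Q₂ᵀ = 1 := Matrix.nonsing_inv_mul _ (Matrix.isUnit_det_transpose Q₂ hQ₂)
  have key : ∀ X : Matrix n₁ n₂ R,
      (B₁ * X = 0 ∧ X * B₂ᵀ = 0) ↔
      ((P₁ * B₁ * Q₁) * (Q₁⁻¹ * X * Q₂ᵀ⁻¹) = 0 ∧ (Q₁⁻¹ * X * Q₂ᵀ⁻¹) * (P₂ * B₂ * Q₂)ᵀ = 0) := by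
    intro X
    have e1 : (P₁ * B₁ * Q₁) * (Q₁⁻¹ * X * Q₂ᵀ⁻¹) = P₁ * (B₁ * X) * Q₂ᵀ⁻¹ := by
      rw [show (P₁ * B₁ * Q₁) * (Q₁⁻¹ * X * Q₂ᵀ⁻¹) = P₁ * B₁ * (Q₁ * Q₁⁻¹) * X * Q₂ᵀ⁻¹ by
        simp only [Matrix.mul_assoc], hQ₁'']
      simp only [Matrix.mul_assoc, Matrix.one_mul]
    have e2 : (Q₁⁻¹ * X * Q₂ᵀ⁻¹) * (P₂ * B₂ * Q₂)ᵀ = Q₁⁻¹ * (X * B₂ᵀ) * P₂ᵀ := by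
      calc (Q₁⁻¹ * X * Q₂ᵀ⁻¹) * (P₂ * B₂ * Q₂)ᵀ
          = Q₁⁻¹ * X * (Q₂ᵀ⁻¹ * Q₂ᵀ) * (B₂ᵀ * P₂ᵀ) := by
            rw [Matrix.transpose_mul, Matrix.transpose_mul]
            simp only [Matrix.mul_assoc]
        _ = Q₁⁻¹ * (X * B₂ᵀ) * P₂ᵀ := by
            rw [hQ₂'']
            simp only [Matrix.mul_one, Matrix.mul_assoc]
    rw [e1, e2]
    rw [mul_right_cancel_zero' _ (Matrix.isUnit_nonsing_inv_det _ (Matrix.isUnit_det_transpose Q₂ hQ₂)),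
      mul_left_cancel_zero' _ hP₁,
      mul_right_cancel_zero' _ (Matrix.isUnit_det_transpose P₂ hP₂),
      mul_left_cancel_zero' _ (Matrix.isUnit_nonsing_inv_det _ hQ₁)]
  refine
  { toFun := fun X => ⟨Q₁⁻¹ * X.1 * Q₂ᵀ⁻¹, (key X.1).mp X.2⟩
    invFun := fun Y => ⟨Q₁ * Y.1 * Q₂ᵀ, ?_⟩
    left_inv := ?_
    right_inv := ?_ }
  · rcases Y with ⟨Y, hY1, hY2⟩
    rw [key]
    constructor
    · convert hY1 using 2
      calc Q₁⁻¹ * (Q₁ * Y * Q₂ᵀ) * Q₂ᵀ⁻¹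
          = (Q₁⁻¹ * Q₁) * (Y * (Q₂ᵀ * Q₂ᵀ⁻¹)) := by simp only [Matrix.mul_assoc]
        _ = Y := by rw [hQ₁', hQ₂']; simp
    · convert hY2 using 2
      calc Q₁⁻¹ * (Q₁ * Y * Q₂ᵀ) * Q₂ᵀ⁻¹
          = (Q₁⁻¹ * Q₁) * (Y * (Q₂ᵀ * Q₂ᵀ⁻¹)) := by simp only [Matrix.mul_assoc]
        _ = Y := by rw [hQ₁', hQ₂']; simp
  · rintro ⟨X, hX⟩
    ext i j
    simp only
    rw [show Q₁ * (Q₁⁻¹ * X * Q₂ᵀ⁻¹) * Q₂ᵀ = (Q₁ * Q₁⁻¹) * (X * (Q₂ᵀ⁻¹ * Q₂ᵀ)) by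
      simp only [Matrix.mul_assoc], hQ₁'', hQ₂'']
    simp
  · rintro ⟨Y, hY⟩
    ext i j
    simp only
    rw [show Q₁⁻¹ * (Q₁ * Y * Q₂ᵀ) * Q₂ᵀ⁻¹ = (Q₁⁻¹ * Q₁) * (Y * (Q₂ᵀ * Q₂ᵀ⁻¹)) by
      simp only [Matrix.mul_assoc], hQ₁', hQ₂']
    simp

lemma mat_cols_iff {α n κ : Type} [Fintype n] [Fintype κ]
    (A : Matrix α n R) (X : Matrix n κ R) :
    A * X = 0 ↔ ∀ v, A.mulVec (fun u => X u v) = 0 := by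
  constructor
  · intro h v
    funext e
    have := congrFun (congrFun h e) v
    simpa [Matrix.mul_apply, Matrix.mulVec, dotProduct] using this
  · intro h
    funext e v
    have := congrFun (h v) e
    simpa [Matrix.mul_apply, Matrix.mulVec, dotProduct] using this

lemma mat_rows_iff {β n κ : Type} [Fintype n] [Fintype β] [Fintype κ]
    (B : Matrix β κ R) (X : Matrix n κ R) :
    X * Bᵀ = 0 ↔ ∀ u, B.mulVec (fun v => X u v) = 0 := by
  constructor
  · intro h u
    funext e
    have := congrFun (congrFun h u) e
    simpa [Matrix.mul_apply, Matrix.mulVec, dotProduct, mul_comm] using this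
  · intro h
    funext u e
    have := congrFun (h u) e
    simpa [Matrix.mul_apply, Matrix.mulVec, dotProduct, mul_comm] using this

end MatrixTransport

lemma diag_mul_eq_zero_iff {m : ℕ} {α n κ : Type} [Fintype α] [DecidableEq α]
    [Fintype n] [DecidableEq n] [Fintype κ]
    (r : ℕ) (d : Fin r → ℕ) (hrα : r ≤ Fintype.card α) (hrn : r ≤ Fintype.card n)
    (D : Matrix α n (ZMod m)) (eα : α ≃ Fin (Fintype.card α)) (eβ : n ≃ Fin (Fintype.card n))
    (hD : ∀ (a : α) (b : n), D a b =
      if h : (eα a : ℕ) = (eβ b : ℕ) ∧ (eα a : ℕ) < r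
      then ((d ⟨eα a, h.2⟩ : ℕ) : ZMod m) else 0)
    (Y : Matrix n κ (ZMod m)) :
    D * Y = 0 ↔ ∀ (a : Fin (Fintype.card n)) (c : κ),
      (((if h : (a : ℕ) < r then d ⟨a, h⟩ else m) : ℕ) : ZMod m) * Y (eβ.symm a) c = 0 := by
  have sumeq : ∀ (i : α) (c : κ), (D * Y) i c =
      if h : (eα i : ℕ) < r
      then ((d ⟨eα i, h⟩ : ℕ) : ZMod m) * Y (eβ.symm ⟨eα i, lt_of_lt_of_le h hrn⟩) c
      else 0 := by
    intro i c
    rw [Matrix.mul_apply]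
    by_cases h : (eα i : ℕ) < r
    · rw [dif_pos h]
      rw [Finset.sum_eq_single (eβ.symm ⟨eα i, lt_of_lt_of_le h hrn⟩)]
      · rw [hD, dif_pos ⟨by simp, h⟩]
      · intro b _ hb
        rw [hD, dif_neg, zero_mul]
        rintro ⟨h1, -⟩
        apply hb
        have : eβ b = ⟨(eα i : ℕ), lt_of_lt_of_le h hrn⟩ := by
          ext; exact h1.symm
        rw [← this]; simp
      · intro hmem; exact absurd (Finset.mem_univ _) hmem
    · rw [dif_neg h]
      apply Finset.sum_eq_zero
      intro b _
      rw [hD, dif_neg, zero_mul]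
      rintro ⟨-, h2⟩; exact h h2
  constructor
  · intro hzero a c
    by_cases h : (a : ℕ) < r
    · rw [dif_pos h]
      have hi := congrFun (congrFun hzero (eα.symm ⟨(a : ℕ), lt_of_lt_of_le h hrα⟩)) c
      rw [sumeq] at hi
      simp only [Equiv.apply_symm_apply] at hi
      rw [dif_pos h] at hi
      convert hi using 3 <;> simp
    · rw [dif_neg h, ZMod.natCast_self, zero_mul]
  · intro hall
    funext i c
    rw [sumeq]
    simp only [Matrix.zero_apply]
    by_cases h : (eα i : ℕ) < r
    · rw [dif_pos h]
      have := hall ⟨(eα i : ℕ), lt_of_lt_of_le h hrn⟩ c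
      rw [dif_pos h] at this
      exact this
    · rw [dif_neg h]

namespace HG
lemma mulVec_inc_apply {m : ℕ} {V : Type} [DecidableEq V] [Fintype V] (G : HG m V)
    (x : V → ZMod m) (e : {e // e ∈ G.edges}) : G.inc.mulVec x e = ∑ v ∈ e.1, x v := by
  simp [inc, Matrix.mulVec, dotProduct, ite_mul, Finset.sum_ite_mem]

lemma mulVec_inc_eq_zero_iff {m : ℕ} {V : Type} [DecidableEq V] [Fintype V] (G : HG m V)
    (x : V → ZMod m) :
    G.inc.mulVec x = 0 ↔ ∀ f ∈ G.edges, ∑ v ∈ f, x v = 0 := by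
  constructor
  · intro h f hf
    have := congrFun h ⟨f, hf⟩
    rwa [mulVec_inc_apply] at this
  · intro h
    funext e
    rw [mulVec_inc_apply]
    exact h e.1 e.2

lemma mulVec_inc_const {m : ℕ} {V : Type} [DecidableEq V] [Fintype V] (G : HG m V) (c : ZMod m) :
    G.inc.mulVec (fun _ => c) = 0 := by
  rw [mulVec_inc_eq_zero_iff]
  intro f hf
  rw [Finset.sum_const, G.uniform f hf, ← Nat.cast_smul_eq_nsmul (ZMod m),
    ZMod.natCast_self, zero_smul]
end HG

/-- The number of nonzero invariant divisors of the incidence matrix is less than `n`. -/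
lemma rank_lt (m n : ℕ) (hm : 2 ≤ m) (hn : 2 ≤ n) (G : HG m (Fin n)) (r : ℕ) (d : Fin r → ℕ)
    (hd : HasInvDiv G.inc r d) : r < n := by
  haveI : NeZero m := ⟨by omega⟩
  obtain ⟨hrα, hrβ, hdm, hdvd, P, Q, eα, eβ, hP, hQ, hPQ⟩ := hd
  rcases Nat.eq_zero_or_pos r with rfl | hr
  · omega
  by_contra hge
  push_neg at hge
  have hcardn : Fintype.card (Fin n) = n := Fintype.card_fin n
  have hrn : r = n := by omega
  set x : Fin n → ZMod m := fun _ => 1 with hxdef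
  have hx : G.inc.mulVec x = 0 := G.mulVec_inc_const 1
  set z : Fin n → ZMod m := Q⁻¹.mulVec x with hzdef
  have hxz : Q.mulVec z = x := by
    rw [hzdef, Matrix.mulVec_mulVec, Matrix.mul_nonsing_inv Q hQ, Matrix.one_mulVec]
  have hDz : (P * G.inc * Q).mulVec z = 0 := by
    rw [← Matrix.mulVec_mulVec, hxz, ← Matrix.mulVec_mulVec, hx, Matrix.mulVec_zero]
  set Y : Matrix (Fin n) Unit (ZMod m) := Matrix.of (fun b _ => z b) with hYdef
  have hDY : (P * G.inc * Q) * Y = 0 := by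
    funext i u
    have := congrFun hDz i
    simpa [Matrix.mul_apply, Matrix.mulVec, dotProduct, hYdef] using this
  rw [diag_mul_eq_zero_iff r d hrα hrβ _ eα eβ hPQ] at hDY
  have hlt : ∀ a : Fin (Fintype.card (Fin n)), (a : ℕ) < r := by
    intro a
    have : (a : ℕ) < n := lt_of_lt_of_le a.isLt (le_of_eq hcardn)
    omega
  have hrr : r - 1 < r := by omega
  have hkill : ∀ b : Fin n, ((d ⟨r - 1, hrr⟩ : ℕ) : ZMod m) * z b = 0 := by
    intro b
    have h1 : ((d ⟨(eβ b : ℕ), hlt (eβ b)⟩ : ℕ) : ZMod m) * z b = 0 := by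
      have h2 := hDY (eβ b) ()
      rw [dif_pos (hlt (eβ b))] at h2
      simpa [hYdef] using h2
    obtain ⟨t, ht⟩ := hdvd ⟨(eβ b : ℕ), hlt (eβ b)⟩ ⟨r - 1, hrr⟩
      (by have := hlt (eβ b); simp only [Fin.mk_le_mk]; omega)
    rw [ht, Nat.cast_mul]
    calc ((d ⟨(eβ b : ℕ), hlt (eβ b)⟩ : ℕ) : ZMod m) * (t : ZMod m) * z b
        = (t : ZMod m) * (((d ⟨(eβ b : ℕ), hlt (eβ b)⟩ : ℕ) : ZMod m) * z b) := by ring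
      _ = 0 := by rw [h1, mul_zero]
  have hone : ((d ⟨r - 1, hrr⟩ : ℕ) : ZMod m) = 0 := by
    have b0 : Fin n := ⟨0, by omega⟩
    have hz : ((d ⟨r - 1, hrr⟩ : ℕ) : ZMod m) * x b0 = 0 := by
      rw [← hxz]
      show ((d ⟨r - 1, hrr⟩ : ℕ) : ZMod m) * ∑ b, Q b0 b * z b = 0
      rw [Finset.mul_sum]
      apply Finset.sum_eq_zero
      intro b _
      rw [mul_left_comm, hkill b, mul_zero]
    simpa [hxdef] using hz
  rw [ZMod.natCast_eq_zero_iff] at hone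
  have h1 := (hdm ⟨r - 1, hrr⟩).1
  have h2 := (hdm ⟨r - 1, hrr⟩).2.1
  have := Nat.le_of_dvd h1 hone
  omega

lemma card_ker_eq (m : ℕ) (hm : 0 < m) {V : Type} [DecidableEq V] [Fintype V]
    (G : HG m V) (w : V) :
    Nat.card {x : V → ZMod m // G.inc.mulVec x = 0} = G.stabIndex w * m := by
  haveI : NeZero m := ⟨hm.ne'⟩
  have E : {x : V → ZMod m // G.inc.mulVec x = 0} ≃
      {x : V → ZMod m // G.inc.mulVec x = 0 ∧ x w = 0} × ZMod m :=
  { toFun := fun x => (⟨x.1 - fun _ => x.1 w,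
      by rw [Matrix.mulVec_sub, x.2, G.mulVec_inc_const, sub_zero],
      by simp⟩, x.1 w)
    invFun := fun p => ⟨p.1.1 + fun _ => p.2,
      by rw [Matrix.mulVec_add, p.1.2.1, G.mulVec_inc_const, add_zero]⟩
    left_inv := fun x => by
      apply Subtype.ext
      funext v
      simp
    right_inv := fun p => by
      refine Prod.ext ?_ ?_
      · apply Subtype.ext
        funext v
        simp [p.1.2.2]
      · simp [p.1.2.2] }
  rw [Nat.card_congr E, Nat.card_prod, Nat.card_zmod, HG.stabIndex]

lemma cart_ker_iff {m : ℕ} {V₁ V₂ : Type} [DecidableEq V₁] [DecidableEq V₂] [Fintype V₁] [Fintype V₂]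
    (G₁ : HG m V₁) (G₂ : HG m V₂) (x : V₁ × V₂ → ZMod m) :
    (cartProd G₁ G₂).inc.mulVec x = 0 ↔
      (∀ v, G₁.inc.mulVec (fun u => x (u, v)) = 0) ∧
      (∀ u, G₂.inc.mulVec (fun v => x (u, v)) = 0) := by
  rw [HG.mulVec_inc_eq_zero_iff]
  simp only [HG.mulVec_inc_eq_zero_iff]
  constructor
  · intro h
    constructor
    · intro v f hf
      have hmem : Finset.image (fun u => (u, v)) f ∈ (cartProd G₁ G₂).edges := by
        simp only [cartProd, Finset.mem_union, Finset.mem_biUnion, Finset.mem_univ, true_and,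
          Finset.mem_image]
        exact Or.inr ⟨v, f, hf, rfl⟩
      have := h _ hmem
      rwa [Finset.sum_image (by intro a _ b _ hab; simpa using hab)] at this
    · intro u f hf
      have hmem : Finset.image (fun v => (u, v)) f ∈ (cartProd G₁ G₂).edges := by
        simp only [cartProd, Finset.mem_union, Finset.mem_biUnion, Finset.mem_univ, true_and,
          Finset.mem_image]
        exact Or.inl ⟨u, f, hf, rfl⟩
      have := h _ hmem
      rwa [Finset.sum_image (by intro a _ b _ hab; simpa using hab)] at this
  · rintro ⟨h1, h2⟩ e he
    simp only [cartProd, Finset.mem_union, Finset.mem_biUnion, Finset.mem_univ, true_and,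
      Finset.mem_image] at he
    rcases he with ⟨u, f, hf, rfl⟩ | ⟨v, f, hf, rfl⟩
    · rw [Finset.sum_image (by intro a _ b _ hab; simpa using hab)]
      exact h2 u f hf
    · rw [Finset.sum_image (by intro a _ b _ hab; simpa using hab)]
      exact h1 v f hf


lemma hsplit (N r : ℕ) (h : r ≤ N) (f : ℕ → ℕ) :
    ∏ k ∈ Finset.range N, f k =
      (∏ k ∈ Finset.range r, f k) * ∏ k ∈ Finset.Ico r N, f k := by
  simp only [Finset.range_eq_Ico]
  exact (Finset.prod_Ico_consecutive f (Nat.zero_le r) h).symm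

lemma arith_prod (m n₁ n₂ r₁ r₂ : ℕ) (hr₁ : r₁ < n₁) (hr₂ : r₂ < n₂)
    (d : Fin r₁ → ℕ) (e : Fin r₂ → ℕ)
    (hd : ∀ i, d i ∣ m) (he : ∀ j, e j ∣ m) :
    (∏ k ∈ Finset.range n₁, ∏ l ∈ Finset.range n₂,
      Nat.gcd (if h : k < r₁ then d ⟨k, h⟩ else m) (if h : l < r₂ then e ⟨l, h⟩ else m)) =
    (m ^ ((n₁ - r₁) * (n₂ - r₂) - 1) *
        (∏ i : Fin r₁, ∏ j : Fin r₂, Nat.gcd (d i) (e j)) *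
        (∏ i : Fin r₁, d i ^ (n₂ - r₂)) * (∏ j : Fin r₂, e j ^ (n₁ - r₁))) * m := by
  have hpos : 1 ≤ (n₁ - r₁) * (n₂ - r₂) := Nat.mul_pos (by omega) (by omega)
  have inner : ∀ c : ℕ,
      (∏ l ∈ Finset.range n₂, Nat.gcd c (if h : l < r₂ then e ⟨l, h⟩ else m)) =
      (∏ j : Fin r₂, Nat.gcd c (e j)) * Nat.gcd c m ^ (n₂ - r₂) := by
    intro c
    rw [hsplit n₂ r₂ hr₂.le]
    congr 1
    · rw [← Fin.prod_univ_eq_prod_range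
        (fun l => Nat.gcd c (if h : l < r₂ then e ⟨l, h⟩ else m)) r₂]
      refine Finset.prod_congr rfl fun j _ => ?_
      have hj : (if h : (j : ℕ) < r₂ then e ⟨j, h⟩ else m) = e j := dif_pos j.isLt
      rw [hj]
    · rw [Finset.prod_congr rfl (fun l hl => ?_), Finset.prod_const, Nat.card_Ico]
      rw [dif_neg]
      have := (Finset.mem_Ico.mp hl).1
      omega
  calc (∏ k ∈ Finset.range n₁, ∏ l ∈ Finset.range n₂,
      Nat.gcd (if h : k < r₁ then d ⟨k, h⟩ else m) (if h : l < r₂ then e ⟨l, h⟩ else m))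
      = ∏ k ∈ Finset.range n₁,
          ((∏ j : Fin r₂, Nat.gcd (if h : k < r₁ then d ⟨k, h⟩ else m) (e j)) *
            Nat.gcd (if h : k < r₁ then d ⟨k, h⟩ else m) m ^ (n₂ - r₂)) :=
        Finset.prod_congr rfl fun k _ => inner _
    _ = ((∏ i : Fin r₁, ((∏ j : Fin r₂, Nat.gcd (d i) (e j)) * (d i) ^ (n₂ - r₂)))) *
          (((∏ j : Fin r₂, e j) * m ^ (n₂ - r₂)) ^ (n₁ - r₁)) := by
        rw [hsplit n₁ r₁ hr₁.le]
        congr 1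
        · rw [← Fin.prod_univ_eq_prod_range (fun k =>
            ((∏ j : Fin r₂, Nat.gcd (if h : k < r₁ then d ⟨k, h⟩ else m) (e j)) *
              Nat.gcd (if h : k < r₁ then d ⟨k, h⟩ else m) m ^ (n₂ - r₂))) r₁]
          refine Finset.prod_congr rfl fun i _ => ?_
          have hi : (if h : (i : ℕ) < r₁ then d ⟨i, h⟩ else m) = d i := dif_pos i.isLt
          rw [hi, Nat.gcd_eq_left (hd i)]
        · rw [Finset.prod_congr rfl (fun k hk => ?_), Finset.prod_const, Nat.card_Ico]
          rw [dif_neg (by have := (Finset.mem_Ico.mp hk).1; omega)]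
          congr 1
          · exact Finset.prod_congr rfl fun j _ => Nat.gcd_eq_right (he j)
          · rw [Nat.gcd_self]
    _ = (∏ i : Fin r₁, ∏ j : Fin r₂, Nat.gcd (d i) (e j)) * (∏ i : Fin r₁, d i ^ (n₂ - r₂)) *
          ((∏ j : Fin r₂, e j ^ (n₁ - r₁)) * m ^ ((n₁ - r₁) * (n₂ - r₂))) := by
        rw [Finset.prod_mul_distrib, mul_pow, ← Finset.prod_pow, ← pow_mul,
          Nat.mul_comm (n₂ - r₂) (n₁ - r₁)]
    _ = (m ^ ((n₁ - r₁) * (n₂ - r₂) - 1) *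
          (∏ i : Fin r₁, ∏ j : Fin r₂, Nat.gcd (d i) (e j)) *
          (∏ i : Fin r₁, d i ^ (n₂ - r₂)) * (∏ j : Fin r₂, e j ^ (n₁ - r₁))) * m := by
        rw [show m ^ ((n₁ - r₁) * (n₂ - r₂))
            = m ^ ((n₁ - r₁) * (n₂ - r₂) - 1) * m by
          rw [← pow_succ, Nat.sub_add_cancel hpos]]
        ring

end Auxiliary

/-- **Stabilizing index of a Cartesian product.** If the incidence matrices of connected
`m`-uniform hypergraphs `G₁` (on `n₁` vertices) and `G₂` (on `n₂` vertices) have invariant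
divisors `d₁,…,d_{r₁}` and `d̄₁,…,d̄_{r₂}` over `ZMod m`, then
`s(G₁ □ G₂) = m^{(n₁-r₁)(n₂-r₂)-1} ∏_{i,j} gcd(dᵢ,d̄ⱼ) ∏_i dᵢ^{n₂-r₂} ∏_j d̄ⱼ^{n₁-r₁}`. -/
theorem stabIndex_cartProd (m n₁ n₂ : ℕ) (hm : 2 ≤ m) (hn₁ : 2 ≤ n₁) (hn₂ : 2 ≤ n₂)
    (G₁ : HG m (Fin n₁)) (G₂ : HG m (Fin n₂))
    (h₁ : G₁.Connected) (h₂ : G₂.Connected)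
    (r₁ r₂ : ℕ) (d : Fin r₁ → ℕ) (e : Fin r₂ → ℕ)
    (hd : HasInvDiv G₁.inc r₁ d) (he : HasInvDiv G₂.inc r₂ e)
    (w : Fin n₁ × Fin n₂) :
    (cartProd G₁ G₂).stabIndex w =
      m ^ ((n₁ - r₁) * (n₂ - r₂) - 1) *
        (∏ i : Fin r₁, ∏ j : Fin r₂, Nat.gcd (d i) (e j)) *
        (∏ i : Fin r₁, d i ^ (n₂ - r₂)) * (∏ j : Fin r₂, e j ^ (n₁ - r₁)) := by
  have hm0 : 0 < m := by omega
  haveI : NeZero m := ⟨by omega⟩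
  have hrn1 : r₁ < n₁ := rank_lt m n₁ hm hn₁ G₁ r₁ d hd
  have hrn2 : r₂ < n₂ := rank_lt m n₂ hm hn₂ G₂ r₂ e he
  obtain ⟨hr1α, hr1β, hd1, hdvd1, P₁, Q₁, eα₁, eβ₁, hP₁, hQ₁, hPQ₁⟩ := hd
  obtain ⟨hr2α, hr2β, hd2, hdvd2, P₂, Q₂, eα₂, eβ₂, hP₂, hQ₂, hPQ₂⟩ := he
  apply Nat.eq_of_mul_eq_mul_right hm0
  rw [← card_ker_eq m hm0 (cartProd G₁ G₂) w]
  -- Step 1: to matrix form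
  have cond_iff : ∀ x : Fin n₁ × Fin n₂ → ZMod m,
      (cartProd G₁ G₂).inc.mulVec x = 0 ↔
      (G₁.inc * Matrix.of (fun u v => x (u, v)) = 0 ∧
        (Matrix.of (fun u v => x (u, v))) * G₂.incᵀ = 0) := by
    intro x
    rw [cart_ker_iff, mat_cols_iff, mat_rows_iff]
    exact Iff.rfl
  have E1 : {x : Fin n₁ × Fin n₂ → ZMod m // (cartProd G₁ G₂).inc.mulVec x = 0} ≃
      {X : Matrix (Fin n₁) (Fin n₂) (ZMod m) // G₁.inc * X = 0 ∧ X * G₂.incᵀ = 0} :=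
  { toFun := fun x => ⟨Matrix.of (fun u v => x.1 (u, v)), (cond_iff x.1).mp x.2⟩
    invFun := fun X => ⟨fun p => X.1 p.1 p.2, (cond_iff _).mpr X.2⟩
    left_inv := fun x => rfl
    right_inv := fun X => rfl }
  have E2 := kerEquiv G₁.inc G₂.inc P₁ Q₁ P₂ Q₂ hP₁ hQ₁ hP₂ hQ₂
  have c1iff := fun (Y : Matrix (Fin n₁) (Fin n₂) (ZMod m)) => diag_mul_eq_zero_iff r₁ d hr1α hr1β (P₁ * G₁.inc * Q₁) eα₁ eβ₁ hPQ₁ Y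
  have c2iff : ∀ Y : Matrix (Fin n₁) (Fin n₂) (ZMod m),
      Y * (P₂ * G₂.inc * Q₂)ᵀ = 0 ↔ ∀ (a : Fin (Fintype.card (Fin n₂))) (c : Fin n₁),
      (((if h : (a : ℕ) < r₂ then e ⟨a, h⟩ else m) : ℕ) : ZMod m) * Y c (eβ₂.symm a) = 0 := by
    intro Y
    have hiff : Y * (P₂ * G₂.inc * Q₂)ᵀ = 0 ↔ (P₂ * G₂.inc * Q₂) * Yᵀ = 0 := by
      constructor
      · intro h
        have := congrArg Matrix.transpose h
        simpa [Matrix.transpose_mul] using this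
      · intro h
        have := congrArg Matrix.transpose h
        simpa [Matrix.transpose_mul] using this
    rw [hiff, diag_mul_eq_zero_iff r₂ e hr2α hr2β (P₂ * G₂.inc * Q₂) eα₂ eβ₂ hPQ₂ Yᵀ]
    exact Iff.rfl
  have E3 : {Y : Matrix (Fin n₁) (Fin n₂) (ZMod m) //
      (P₁ * G₁.inc * Q₁) * Y = 0 ∧ Y * (P₂ * G₂.inc * Q₂)ᵀ = 0} ≃
      {Z : Fin (Fintype.card (Fin n₁)) × Fin (Fintype.card (Fin n₂)) → ZMod m //
        ∀ p, (((if h : (p.1 : ℕ) < r₁ then d ⟨p.1, h⟩ else m) : ℕ) : ZMod m) * Z p = 0 ∧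
             (((if h : (p.2 : ℕ) < r₂ then e ⟨p.2, h⟩ else m) : ℕ) : ZMod m) * Z p = 0} :=
  { toFun := fun Y => ⟨fun p => Y.1 (eβ₁.symm p.1) (eβ₂.symm p.2), fun p =>
      ⟨(c1iff Y.1).mp Y.2.1 p.1 (eβ₂.symm p.2), (c2iff Y.1).mp Y.2.2 p.2 (eβ₁.symm p.1)⟩⟩
    invFun := fun Z => ⟨Matrix.of (fun u v => Z.1 (eβ₁ u, eβ₂ v)), by
      constructor
      · rw [c1iff]
        intro a c
        have := (Z.2 (a, eβ₂ c)).1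
        simpa using this
      · rw [c2iff]
        intro a c
        have := (Z.2 (eβ₁ c, a)).2
        simpa using this⟩
    left_inv := fun Y => by
      apply Subtype.ext
      ext u v
      simp
    right_inv := fun Z => by
      apply Subtype.ext
      funext p
      simp }
  have E4 := Equiv.subtypePiEquivPi
    (p := fun (p : Fin (Fintype.card (Fin n₁)) × Fin (Fintype.card (Fin n₂))) (z : ZMod m) =>
      (((if h : (p.1 : ℕ) < r₁ then d ⟨p.1, h⟩ else m) : ℕ) : ZMod m) * z = 0 ∧
      (((if h : (p.2 : ℕ) < r₂ then e ⟨p.2, h⟩ else m) : ℕ) : ZMod m) * z = 0)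
  rw [Nat.card_congr (((E1.trans E2).trans E3).trans E4), Nat.card_pi]
  have hcount : ∀ p : Fin (Fintype.card (Fin n₁)) × Fin (Fintype.card (Fin n₂)),
      Nat.card {z : ZMod m //
        (((if h : (p.1 : ℕ) < r₁ then d ⟨p.1, h⟩ else m) : ℕ) : ZMod m) * z = 0 ∧
        (((if h : (p.2 : ℕ) < r₂ then e ⟨p.2, h⟩ else m) : ℕ) : ZMod m) * z = 0} =
      Nat.gcd (if h : (p.1 : ℕ) < r₁ then d ⟨p.1, h⟩ else m)
        (if h : (p.2 : ℕ) < r₂ then e ⟨p.2, h⟩ else m) := by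
    intro p
    apply count2 m _ _ hm0
    by_cases h : (p.1 : ℕ) < r₁
    · rw [dif_pos h]; exact (hd1 ⟨p.1, h⟩).2.2
    · rw [dif_neg h]
  rw [Finset.prod_congr rfl (fun p _ => hcount p), Fintype.prod_prod_type]
  have step : ∀ a : Fin (Fintype.card (Fin n₁)),
      (∏ b : Fin (Fintype.card (Fin n₂)),
        Nat.gcd (if h : (a : ℕ) < r₁ then d ⟨a, h⟩ else m)
          (if h : (b : ℕ) < r₂ then e ⟨b, h⟩ else m)) =
      ∏ l ∈ Finset.range (Fintype.card (Fin n₂)),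
        Nat.gcd (if h : (a : ℕ) < r₁ then d ⟨a, h⟩ else m)
          (if h : l < r₂ then e ⟨l, h⟩ else m) := fun a =>
    Fin.prod_univ_eq_prod_range (fun l => Nat.gcd _ (if h : l < r₂ then e ⟨l, h⟩ else m)) _
  rw [Finset.prod_congr rfl (fun a _ => step a),
    Fin.prod_univ_eq_prod_range (fun k => ∏ l ∈ Finset.range (Fintype.card (Fin n₂)),
      Nat.gcd (if h : k < r₁ then d ⟨k, h⟩ else m) (if h : l < r₂ then e ⟨l, h⟩ else m)) _,
    Fintype.card_fin, Fintype.card_fin]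
  exact arith_prod m n₁ n₂ r₁ r₂ hrn1 hrn2 d e (fun i => (hd1 i).2.2) (fun j => (hd2 j).2.2)
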